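/- (Lower Comparison Lemma) Let H(n,k,g) = k + (n-k+1)·g(n) + Σ_{i=n-k+1}^{n} g(i). Let s : ℕ → ℝ satisfy s(1) = 1 and s(n+1) = (1/(n+1)) max_{1≤k≤n} H(n,k,s) for n ≥ 1. Suppose g : ℕ → ℝ and δ : ℕ → ℝ≥0 satisfy g(1) − δ(1) ≤ 1 and g(n+1) − δ(n+1) ≤ (1/(n+1)) max_{1≤k≤n} H(n,k,g) for all n ≥ 1. Then g(n) − Σ_{i=1}^{n} δ(i) ≤ s(n) for all n ≥ 1. -/

import Mathlib

open Finset

/-- `H n k g = k + (n-k+1) g(n) + ∑_{i=n-k+1}^{n} g(i)`. -/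
noncomputable def H (g : ℕ → ℝ) (n k : ℕ) : ℝ :=
  (k : ℝ) + ((n : ℝ) - (k : ℝ) + 1) * g n + ∑ i ∈ Finset.Icc (n - k + 1) n, g i

/-- `max_{1 ≤ k ≤ n} H(n,k,g)` for `n ≥ 1`. -/
noncomputable def maxH (g : ℕ → ℝ) (n : ℕ) (hn : 1 ≤ n) : ℝ :=
  (Finset.Icc 1 n).sup' (Finset.nonempty_Icc.mpr hn) (fun k => H g n k)

/-- Lower comparison lemma. -/
theorem stmt_4 (s g : ℕ → ℝ) (δ : ℕ → ℝ) (hδ : ∀ i, 0 ≤ δ i)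
    (h1 : s 1 = 1)
    (hrec : ∀ n : ℕ, ∀ hn : 1 ≤ n, s (n + 1) = (1 / ((n : ℝ) + 1)) * maxH s n hn)
    (hg1 : g 1 - δ 1 ≤ 1)
    (hg : ∀ n : ℕ, ∀ hn : 1 ≤ n, g (n + 1) - δ (n + 1) ≤ (1 / ((n : ℝ) + 1)) * maxH g n hn) :
    ∀ n : ℕ, 1 ≤ n → g n - ∑ i ∈ Finset.Icc 1 n, δ i ≤ s n := by
  set D : ℕ → ℝ := fun n => ∑ i ∈ Finset.Icc 1 n, δ i with hD
  have hDmono : ∀ i j : ℕ, i ≤ j → D i ≤ D j := by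
    intro i j hij
    apply Finset.sum_le_sum_of_subset_of_nonneg
    · exact Finset.Icc_subset_Icc_right hij
    · intro k _ _; exact hδ k
  intro n
  induction n using Nat.strong_induction_on with
  | _ n ih =>
    intro hn
    match n, hn with
    | 1, _ =>
      simp only [hD, Finset.Icc_self, Finset.sum_singleton]
      rw [h1]; exact hg1
    | (m + 2), _ =>
      set m1 := m + 1 with hm1
      have hm : 1 ≤ m1 := Nat.le_add_left 1 m
      -- key bound on maxH g
      have key : ∀ k ∈ Finset.Icc 1 m1, H g m1 k ≤ H s m1 k + ((m1 : ℝ) + 1) * D m1 := by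
        intro k hk
        rw [Finset.mem_Icc] at hk
        obtain ⟨hk1, hk2⟩ := hk
        have hgm : g m1 ≤ s m1 + D m1 := by
          have := ih m1 (Nat.lt_succ_self _) hm
          linarith
        have hsum : ∑ i ∈ Finset.Icc (m1 - k + 1) m1, g i ≤
            (∑ i ∈ Finset.Icc (m1 - k + 1) m1, s i) + (k : ℝ) * D m1 := by
          have hcard : (Finset.Icc (m1 - k + 1) m1).card = k := by
            rw [Nat.card_Icc]; omega
          calc ∑ i ∈ Finset.Icc (m1 - k + 1) m1, g i
              ≤ ∑ i ∈ Finset.Icc (m1 - k + 1) m1, (s i + D m1) := by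
                apply Finset.sum_le_sum
                intro i hi
                rw [Finset.mem_Icc] at hi
                have hi1 : 1 ≤ i := by omega
                have hilt : i < m1 + 1 := by omega
                have := ih i hilt hi1
                have := hDmono i m1 hi.2
                linarith
            _ = (∑ i ∈ Finset.Icc (m1 - k + 1) m1, s i) + (k : ℝ) * D m1 := by
                rw [Finset.sum_add_distrib, Finset.sum_const, hcard, nsmul_eq_mul]
        have hcoef : (0:ℝ) ≤ (m1 : ℝ) - (k : ℝ) + 1 := by
          have : (k : ℝ) ≤ (m1 : ℝ) := by exact_mod_cast hk2
          linarith
        have hDnn : 0 ≤ D m1 := Finset.sum_nonneg fun i _ => hδ i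
        have h2 : ((m1 : ℝ) - (k : ℝ) + 1) * g m1 ≤
            ((m1 : ℝ) - (k : ℝ) + 1) * s m1 + ((m1 : ℝ) - (k : ℝ) + 1) * D m1 := by
          nlinarith
        simp only [H]
        nlinarith
      have hmaxle : maxH g m1 hm ≤ maxH s m1 hm + ((m1 : ℝ) + 1) * D m1 := by
        apply Finset.sup'_le
        intro k hk
        calc H g m1 k ≤ H s m1 k + ((m1 : ℝ) + 1) * D m1 := key k hk
          _ ≤ maxH s m1 hm + ((m1 : ℝ) + 1) * D m1 :=
              add_le_add_left (Finset.le_sup' (fun k => H s m1 k) hk) _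
      have hrecm := hrec m1 hm
      have hgm := hg m1 hm
      have hDsucc : D (m1 + 1) = D m1 + δ (m1 + 1) := by
        simp only [hD]
        rw [Finset.sum_Icc_succ_top (by omega : 1 ≤ m1 + 1)]
      have hpos : (0:ℝ) < (m1 : ℝ) + 1 := by positivity
      have hfin : (1 / ((m1 : ℝ) + 1)) * maxH g m1 hm ≤
          (1 / ((m1 : ℝ) + 1)) * maxH s m1 hm + D m1 := by
        rw [div_mul_eq_mul_div, div_mul_eq_mul_div, one_mul, one_mul, div_add' _ _ _ (ne_of_gt hpos),
          div_le_div_iff₀ hpos hpos]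
        nlinarith
      show g (m1 + 1) - D (m1 + 1) ≤ s (m1 + 1)
      rw [hDsucc, hrecm]
      linarith
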